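/- Let T be an optimal irreducible 2WCST whose root is a less-than test ⟨< r⟩ with 2 < r ≤ n−1, whose <-branch is rooted at an equal-to test ⟨= m⟩ on a maximum-weight key m with w_m ≥ (3/7)·w(T); let T₁ be the ≠-branch subtree of ⟨= m⟩, let T₂ be the ≥-branch subtree of ⟨< r⟩, and let the root of T₂ be a test node on a key i with =/≥-branch subtree T₃ and ≠/<-branch subtree T₄. If w(T₃) ≥ (1/3)·w(T₂), then the tree T' obtained by rotating ⟨= m⟩ to the root and then rotating the test on i to be the ≠-child of ⟨= m⟩ — so that in T' the leaf m is one level higher, T₃ keeps its depth, and T₁ and T₄ are each one level deeper — is a valid 2WCST rooted at an equal-to test with cost(T') ≤ cost(T). -/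
import Mathlib


/-- Binary search trees with two-way comparisons (2WCST):
leaves are labelled by keys, internal nodes are equal-to tests `eqNode k yes no`
or less-than tests `ltNode k yes no` (yes-branch taken when `q = k`, resp. `q < k`). -/
inductive CTree where
  | leaf : ℕ → CTree
  | eqNode : ℕ → CTree → CTree → CTree
  | ltNode : ℕ → CTree → CTree → CTree
deriving DecidableEq

namespace CTree

/-- The key labelling the leaf reached by query `q`. -/
def search : CTree → ℕ → ℕ
  | leaf k, _ => k
  | eqNode k y nb, q => if q = k then y.search q else nb.search q
  | ltNode k y nb, q => if q < k then y.search q else nb.search q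

/-- The depth of the leaf reached by query `q`. -/
def searchDepth : CTree → ℕ → ℕ
  | leaf _, _ => 0
  | eqNode k y nb, q => (if q = k then y.searchDepth q else nb.searchDepth q) + 1
  | ltNode k y nb, q => (if q < k then y.searchDepth q else nb.searchDepth q) + 1

/-- All keys appearing in the tree (leaf labels and test keys). -/
def keys : CTree → Finset ℕ
  | leaf k => {k}
  | eqNode k y nb => insert k (y.keys ∪ nb.keys)
  | ltNode k y nb => insert k (y.keys ∪ nb.keys)

/-- `T` is a valid 2WCST for the instance with key set `K = {1, …, n}`:
all keys used belong to `K` and every query `q ∈ K` reaches a leaf labelled `q`. -/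
def ValidFor (n : ℕ) (T : CTree) : Prop :=
  T.keys ⊆ Finset.Icc 1 n ∧ ∀ q ∈ Finset.Icc 1 n, T.search q = q

/-- The cost of `T`: `∑_{k ∈ K} w_k · depth_T(k)`. -/
noncomputable def cost (w : ℕ → ℝ) (n : ℕ) (T : CTree) : ℝ :=
  ∑ k ∈ Finset.Icc 1 n, w k * T.searchDepth k

/-- `T` is an optimal 2WCST for the instance. -/
noncomputable def OptimalFor (w : ℕ → ℝ) (n : ℕ) (T : CTree) : Prop :=
  ValidFor n T ∧ ∀ T' : CTree, ValidFor n T' → cost w n T ≤ cost w n T'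

/-- `w(S)`: total weight of the keys labelling the leaves of a subtree. -/
noncomputable def wt (w : ℕ → ℝ) : CTree → ℝ
  | leaf k => w k
  | eqNode _ y nb => wt w y + wt w nb
  | ltNode _ y nb => wt w y + wt w nb

/-- The side-weight of a node. -/
noncomputable def sw (w : ℕ → ℝ) : CTree → ℝ
  | leaf _ => 0
  | eqNode k _ _ => w k
  | ltNode _ y nb => min (wt w y) (wt w nb)

/-- `Occurs s T`: `s` occurs as a subtree (node) of `T`. -/
inductive Occurs : CTree → CTree → Prop
  | refl (t : CTree) : Occurs t t
  | eqYes {s k y nb} : Occurs s y → Occurs s (eqNode k y nb)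
  | eqNo {s k y nb} : Occurs s nb → Occurs s (eqNode k y nb)
  | ltYes {s k y nb} : Occurs s y → Occurs s (ltNode k y nb)
  | ltNo {s k y nb} : Occurs s nb → Occurs s (ltNode k y nb)

/-- `v` is a child of node `u`. -/
def IsChildOf (v u : CTree) : Prop :=
  match u with
  | leaf _ => False
  | eqNode _ y nb => v = y ∨ v = nb
  | ltNode _ y nb => v = y ∨ v = nb

/-- The root of the tree is an equal-to test. -/
def RootEq : CTree → Prop
  | eqNode _ _ _ => True
  | _ => False

/-- `ReplaceAt s t T T'`: `T'` is obtained from `T` by replacing one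
occurrence of the subtree `s` by `t`, leaving the rest of `T` unchanged. -/
inductive ReplaceAt (s t : CTree) : CTree → CTree → Prop
  | here : ReplaceAt s t s t
  | eqYes {k y y' nb} : ReplaceAt s t y y' → ReplaceAt s t (eqNode k y nb) (eqNode k y' nb)
  | eqNo {k y nb nb'} : ReplaceAt s t nb nb' → ReplaceAt s t (eqNode k y nb) (eqNode k y nb')
  | ltYes {k y y' nb} : ReplaceAt s t y y' → ReplaceAt s t (ltNode k y nb) (ltNode k y' nb)
  | ltNo {k y nb nb'} : ReplaceAt s t nb nb' → ReplaceAt s t (ltNode k y nb) (ltNode k y nb')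

/-- Irreducibility relative to the set `Q` of queries that reach the current subtree:
every branch of every node is traversed by some query. -/
def IrredFrom : Finset ℕ → CTree → Prop
  | _, leaf _ => True
  | Q, eqNode k y nb =>
      (Q.filter (· = k)).Nonempty ∧ (Q.filter (· ≠ k)).Nonempty ∧
      IrredFrom (Q.filter (· = k)) y ∧ IrredFrom (Q.filter (· ≠ k)) nb
  | Q, ltNode k y nb =>
      (Q.filter (· < k)).Nonempty ∧ (Q.filter (fun q => ¬ q < k)).Nonempty ∧
      IrredFrom (Q.filter (· < k)) y ∧ IrredFrom (Q.filter (fun q => ¬ q < k)) nb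

/-- `T` is irreducible: no branch is redundant for the query set `{1, …, n}`. -/
def Irred (n : ℕ) (T : CTree) : Prop := IrredFrom (Finset.Icc 1 n) T

/-- The two kinds of comparison tests. -/
inductive TestKind where
  | eq : TestKind
  | lt : TestKind
deriving DecidableEq

/-- A test node `⟨? k⟩` on key `k` with `=/≥`-branch `hi` and `≠/<`-branch `lo`. -/
def mkTest : TestKind → ℕ → CTree → CTree → CTree
  | .eq, k, hi, lo => eqNode k hi lo
  | .lt, k, hi, lo => ltNode k lo hi

/-- The `=/≥`-outcome of a test of kind `t` on key `b`, applied to query `q`. -/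
def hiOutcome : TestKind → ℕ → ℕ → Prop
  | .eq, b, q => q = b
  | .lt, b, q => b ≤ q

instance (t : TestKind) (b q : ℕ) : Decidable (hiOutcome t b q) :=
  match t with
  | .eq => inferInstanceAs (Decidable (q = b))
  | .lt => inferInstanceAs (Decidable (b ≤ q))

/-- Number of leaves of a tree. -/
def numLeaves : CTree → ℕ
  | leaf _ => 1
  | eqNode _ y nb => y.numLeaves + nb.numLeaves
  | ltNode _ y nb => y.numLeaves + nb.numLeaves

end CTree


namespace CTree

lemma mkTest_search (t : TestKind) (i : ℕ) (T3 T4 : CTree) (q : ℕ) :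
    (mkTest t i T3 T4).search q = if hiOutcome t i q then T3.search q else T4.search q := by
  cases t
  · rfl
  · show (if q < i then T4.search q else T3.search q) = _
    by_cases h : q < i
    · rw [if_pos h, if_neg (show ¬ hiOutcome .lt i q from Nat.not_le.mpr h)]
    · rw [if_neg h, if_pos (show hiOutcome .lt i q from Nat.not_lt.mp h)]

lemma mkTest_searchDepth (t : TestKind) (i : ℕ) (T3 T4 : CTree) (q : ℕ) :
    (mkTest t i T3 T4).searchDepth q
      = (if hiOutcome t i q then T3.searchDepth q else T4.searchDepth q) + 1 := by
  cases t
  · rfl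
  · show (if q < i then T4.searchDepth q else T3.searchDepth q) + 1 = _
    by_cases h : q < i
    · rw [if_pos h, if_neg (show ¬ hiOutcome .lt i q from Nat.not_le.mpr h)]
    · rw [if_neg h, if_pos (show hiOutcome .lt i q from Nat.not_lt.mp h)]

lemma mkTest_keys (t : TestKind) (i : ℕ) (T3 T4 : CTree) :
    (mkTest t i T3 T4).keys = insert i (T3.keys ∪ T4.keys) := by
  cases t <;> simp [mkTest, keys, Finset.union_comm]

lemma mkTest_wt (w : ℕ → ℝ) (t : TestKind) (i : ℕ) (T3 T4 : CTree) :
    wt w (mkTest t i T3 T4) = wt w T3 + wt w T4 := by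
  cases t <;> simp [mkTest, wt] <;> ring

lemma mkTest_irred {t : TestKind} {i : ℕ} {T3 T4 : CTree} {Q : Finset ℕ}
    (h : IrredFrom Q (mkTest t i T3 T4)) :
    (Q.filter (fun q => hiOutcome t i q)).Nonempty ∧
    (Q.filter (fun q => ¬ hiOutcome t i q)).Nonempty ∧
    IrredFrom (Q.filter (fun q => hiOutcome t i q)) T3 ∧
    IrredFrom (Q.filter (fun q => ¬ hiOutcome t i q)) T4 := by
  cases t
  · obtain ⟨h1, h2, h3, h4⟩ := h
    have e1 : Q.filter (fun q => hiOutcome .eq i q) = Q.filter (· = i) :=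
      Finset.filter_congr (fun x _ => Iff.rfl)
    have e2 : Q.filter (fun q => ¬ hiOutcome .eq i q) = Q.filter (· ≠ i) :=
      Finset.filter_congr (fun x _ => Iff.rfl)
    exact ⟨e1 ▸ h1, e2 ▸ h2, e1 ▸ h3, e2 ▸ h4⟩
  · obtain ⟨h1, h2, h3, h4⟩ := h
    have e1 : Q.filter (fun q => hiOutcome .lt i q) = Q.filter (fun q => ¬ q < i) :=
      Finset.filter_congr (fun x _ => by simp [hiOutcome, Nat.not_lt])
    have e2 : Q.filter (fun q => ¬ hiOutcome .lt i q) = Q.filter (· < i) :=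
      Finset.filter_congr (fun x _ => by simp [hiOutcome, Nat.not_le])
    exact ⟨e1 ▸ h2, e2 ▸ h1, e1 ▸ h4, e2 ▸ h3⟩

lemma wt_eq_sum (w : ℕ → ℝ) :
    ∀ (S : CTree) (Q : Finset ℕ), Q.Nonempty → IrredFrom Q S →
      (∀ q ∈ Q, S.search q = q) → wt w S = ∑ q ∈ Q, w q := by
  intro S
  induction S with
  | leaf k =>
    intro Q hne _ hs
    have hQ : Q = {k} := by
      refine Finset.eq_singleton_iff_nonempty_unique_mem.mpr ⟨hne, fun q hq => ?_⟩
      have : k = q := hs q hq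
      omega
    simp [hQ, wt]
  | eqNode k y nb ihy ihn =>
    intro Q hne hirr hs
    obtain ⟨h1, h2, h3, h4⟩ := hirr
    have hy := ihy _ h1 h3 (fun q hq => by
      obtain ⟨hqQ, hqk⟩ := Finset.mem_filter.mp hq
      simpa [search, hqk] using hs q hqQ)
    have hn := ihn _ h2 h4 (fun q hq => by
      obtain ⟨hqQ, hqk⟩ := Finset.mem_filter.mp hq
      simpa [search, hqk] using hs q hqQ)
    have hsplit := Finset.sum_filter_add_sum_filter_not Q (· = k) w
    show wt w y + wt w nb = _
    rw [hy, hn, ← hsplit]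
  | ltNode k y nb ihy ihn =>
    intro Q hne hirr hs
    obtain ⟨h1, h2, h3, h4⟩ := hirr
    have hy := ihy _ h1 h3 (fun q hq => by
      obtain ⟨hqQ, hqk⟩ := Finset.mem_filter.mp hq
      simpa [search, hqk] using hs q hqQ)
    have hn := ihn _ h2 h4 (fun q hq => by
      obtain ⟨hqQ, hqk⟩ := Finset.mem_filter.mp hq
      simpa [search, hqk] using hs q hqQ)
    have hsplit := Finset.sum_filter_add_sum_filter_not Q (· < k) w
    show wt w y + wt w nb = _
    rw [hy, hn, ← hsplit]

lemma sum_corr (w : ℕ → ℝ) (Q : Finset ℕ) (m : ℕ) (hm : m ∈ Q)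
    (p : ℕ → Prop) [DecidablePred p] :
    ∑ q ∈ Q, w q * (if q = m then (-1:ℝ) else if p q then 0 else 1)
      = (∑ q ∈ Q.filter (fun q => ¬ p q ∧ q ≠ m), w q) - w m := by
  classical
  rw [← Finset.sum_erase_add Q _ hm, if_pos rfl]
  have h1 : ∑ q ∈ Q.erase m, w q * (if q = m then (-1:ℝ) else if p q then 0 else 1)
      = ∑ q ∈ Q.erase m, (if ¬ p q ∧ q ≠ m then w q else 0) := by
    refine Finset.sum_congr rfl fun q hq => ?_
    have hqm : q ≠ m := Finset.ne_of_mem_erase hq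
    by_cases hp : p q <;> simp [hqm, hp]
  have h2 : (Q.erase m).filter (fun q => ¬ p q ∧ q ≠ m)
      = Q.filter (fun q => ¬ p q ∧ q ≠ m) := by
    ext q
    simp only [Finset.mem_filter, Finset.mem_erase]
    tauto
  rw [h1, ← Finset.sum_filter, h2]
  ring

end CTree

open CTree in
/-- **Case 1 of the proof of `λ⁺ ≤ 3/7`.** With `T = ⟨< r⟩(⟨= m⟩(M, T₁), ⟨? i⟩(T₃, T₄))`
optimal and irreducible, `2 < r ≤ n−1`, `m` a maximum-weight key with
`w_m ≥ (3/7)·w(T)`, and `w(T₃) ≥ (1/3)·w(T₂)`: the tree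
`T' = ⟨= m⟩(M, ⟨? i⟩(T₃, ⟨< r⟩(T₁, T₄)))` obtained by the two rotations is a valid
2WCST rooted at an equal-to test with `cost(T') ≤ cost(T)`. -/
theorem case_one_rotation
    (n : ℕ) (w : ℕ → ℝ) (hw : ∀ q ∈ Finset.Icc 1 n, 0 ≤ w q)
    (r m i : ℕ) (t : TestKind) (M T1 T3 T4 : CTree)
    (hr1 : 2 < r) (hr2 : r ≤ n - 1)
    (hopt : OptimalFor w n
      (CTree.ltNode r (CTree.eqNode m M T1) (mkTest t i T3 T4)))
    (hirr : Irred n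
      (CTree.ltNode r (CTree.eqNode m M T1) (mkTest t i T3 T4)))
    (hm : m ∈ Finset.Icc 1 n)
    (hmax : ∀ k ∈ Finset.Icc 1 n, w k ≤ w m)
    (hheavy : (3 / 7 : ℝ) *
        wt w (CTree.ltNode r (CTree.eqNode m M T1) (mkTest t i T3 T4)) ≤ w m)
    (hT3 : (1 / 3 : ℝ) * wt w (mkTest t i T3 T4) ≤ wt w T3) :
    ValidFor n (CTree.eqNode m M (mkTest t i T3 (CTree.ltNode r T1 T4))) ∧
    RootEq (CTree.eqNode m M (mkTest t i T3 (CTree.ltNode r T1 T4))) ∧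
    cost w n (CTree.eqNode m M (mkTest t i T3 (CTree.ltNode r T1 T4))) ≤
      cost w n (CTree.ltNode r (CTree.eqNode m M T1) (mkTest t i T3 T4)) := by
  classical
  obtain ⟨⟨hkeys, hsearch⟩, hoptmin⟩ := hopt
  have hirr0 := hirr
  obtain ⟨hne1, hne2, hirrL, hirrR⟩ := hirr
  obtain ⟨hneM, hneT1, hirrM, hirrT1⟩ := hirrL
  -- m < r
  have hmr : m < r := by
    obtain ⟨q0, hq0⟩ := hneM
    simp only [Finset.mem_filter] at hq0
    omega
  obtain ⟨hne3, hne4, hirr3, hirr4⟩ := mkTest_irred hirrR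
  -- the test on i sends every q < r to the lo branch
  have hi_r : ∀ q, q < r → ¬ hiOutcome t i q := by
    obtain ⟨a, ha⟩ := hne3
    obtain ⟨b, hb⟩ := hne4
    simp only [Finset.mem_filter, Finset.mem_Icc] at ha hb
    obtain ⟨⟨_, ha2⟩, ha3⟩ := ha
    obtain ⟨⟨_, hb2⟩, hb3⟩ := hb
    cases t
    · intro q hq hcon
      simp only [hiOutcome] at ha3 hcon
      omega
    · intro q hq hcon
      simp only [hiOutcome] at hb3 hcon
      omega
  have hi_nr : ∀ q, hiOutcome t i q → ¬ q < r := fun q h hlt => hi_r q hlt h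
  have hi_nm : ∀ q, hiOutcome t i q → q ≠ m := fun q h he => hi_r q (he ▸ hmr) h
  -- basic search facts
  have hsM : M.search m = m := by simpa [search, hmr] using hsearch m hm
  have hsT1 : ∀ q ∈ Finset.Icc 1 n, q < r → q ≠ m → T1.search q = q := by
    intro q hq h1 h2
    simpa [search, h1, h2] using hsearch q hq
  have hsT3 : ∀ q ∈ Finset.Icc 1 n, ¬ q < r → hiOutcome t i q → T3.search q = q := by
    intro q hq h1 h2
    simpa [search, h1, mkTest_search, h2] using hsearch q hq
  have hsT4 : ∀ q ∈ Finset.Icc 1 n, ¬ q < r → ¬ hiOutcome t i q → T4.search q = q := by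
    intro q hq h1 h2
    simpa [search, h1, mkTest_search, h2] using hsearch q hq
  -- validity of T'
  have hkeys' : (eqNode m M (mkTest t i T3 (CTree.ltNode r T1 T4))).keys ⊆ Finset.Icc 1 n := by
    simp only [keys, mkTest_keys, Finset.insert_subset_iff, Finset.union_subset_iff] at hkeys ⊢
    tauto
  have hsearch' : ∀ q ∈ Finset.Icc 1 n,
      (eqNode m M (mkTest t i T3 (CTree.ltNode r T1 T4))).search q = q := by
    intro q hq
    by_cases hqm : q = m
    · subst hqm; simp [search, hsM]
    · by_cases hqr : q < r
      · have hh := hi_r q hqr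
        simp [search, mkTest_search, hqm, hh, hqr, hsT1 q hq hqr hqm]
      · by_cases hh : hiOutcome t i q
        · simp [search, mkTest_search, hqm, hh, hsT3 q hq hqr hh]
        · simp [search, mkTest_search, hqm, hh, hqr, hsT4 q hq hqr hh]
  -- validity of T'' (single rotation, used for the optimality bound)
  have hvalid'' : ValidFor n (eqNode m M (CTree.ltNode r T1 (mkTest t i T3 T4))) := by
    constructor
    · simp only [keys, mkTest_keys, Finset.insert_subset_iff, Finset.union_subset_iff] at hkeys ⊢
      tauto
    · intro q hq
      by_cases hqm : q = m
      · subst hqm; simp [search, hsM]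
      · by_cases hqr : q < r
        · simp [search, hqm, hqr, hsT1 q hq hqr hqm]
        · by_cases hh : hiOutcome t i q
          · simp [search, mkTest_search, hqm, hqr, hh, hsT3 q hq hqr hh]
          · simp [search, mkTest_search, hqm, hqr, hh, hsT4 q hq hqr hh]
  -- pointwise depth change for T'
  have hd' : ∀ q ∈ Finset.Icc 1 n,
      ((eqNode m M (mkTest t i T3 (CTree.ltNode r T1 T4))).searchDepth q : ℝ)
        = ((CTree.ltNode r (CTree.eqNode m M T1) (mkTest t i T3 T4)).searchDepth q : ℝ)
          + (if q = m then (-1:ℝ) else if hiOutcome t i q then 0 else 1) := by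
    intro q hq
    by_cases hqm : q = m
    · have hh := hi_r q (by omega)
      simp [searchDepth, mkTest_searchDepth, hqm, hmr, hh]
      try push_cast
      try ring
    · by_cases hqr : q < r
      · have hh := hi_r q hqr
        simp [searchDepth, mkTest_searchDepth, hqm, hqr, hh]
        try push_cast
        try ring
      · by_cases hh : hiOutcome t i q
        · simp [searchDepth, mkTest_searchDepth, hqm, hqr, hh]
        · simp [searchDepth, mkTest_searchDepth, hqm, hqr, hh]
          try push_cast
          try ring
  -- pointwise depth change for T''
  have hd'' : ∀ q ∈ Finset.Icc 1 n,
      ((eqNode m M (CTree.ltNode r T1 (mkTest t i T3 T4))).searchDepth q : ℝ)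
        = ((CTree.ltNode r (CTree.eqNode m M T1) (mkTest t i T3 T4)).searchDepth q : ℝ)
          + (if q = m then (-1:ℝ) else if q < r then 0 else 1) := by
    intro q hq
    by_cases hqm : q = m
    · simp [searchDepth, hqm, hmr]
      try push_cast
      try ring
    · by_cases hqr : q < r
      · simp [searchDepth, hqm, hqr]
      · simp [searchDepth, hqm, hqr]
        try push_cast
        try ring
  have hcost' : cost w n (eqNode m M (mkTest t i T3 (CTree.ltNode r T1 T4)))
      = cost w n (CTree.ltNode r (CTree.eqNode m M T1) (mkTest t i T3 T4))
        + ∑ q ∈ Finset.Icc 1 n, w q * (if q = m then (-1:ℝ) else if hiOutcome t i q then 0 else 1) := by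
    unfold cost
    rw [← Finset.sum_add_distrib]
    refine Finset.sum_congr rfl fun q hq => ?_
    rw [hd' q hq]; ring
  have hcost'' : cost w n (eqNode m M (CTree.ltNode r T1 (mkTest t i T3 T4)))
      = cost w n (CTree.ltNode r (CTree.eqNode m M T1) (mkTest t i T3 T4))
        + ∑ q ∈ Finset.Icc 1 n, w q * (if q = m then (-1:ℝ) else if q < r then 0 else 1) := by
    unfold cost
    rw [← Finset.sum_add_distrib]
    refine Finset.sum_congr rfl fun q hq => ?_
    rw [hd'' q hq]; ring
  -- from optimality: w m ≤ weight of queries ≥ r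
  have hopt'' := hoptmin _ hvalid''
  rw [hcost'', sum_corr w _ m hm] at hopt''
  have hfilter'' : (Finset.Icc 1 n).filter (fun q => ¬ q < r ∧ q ≠ m)
      = (Finset.Icc 1 n).filter (fun q => ¬ q < r) := by
    ext q
    simp only [Finset.mem_filter]
    constructor
    · exact fun h => ⟨h.1, h.2.1⟩
    · exact fun h => ⟨h.1, h.2, by omega⟩
  rw [hfilter''] at hopt''
  have hwm_le : w m ≤ ∑ q ∈ (Finset.Icc 1 n).filter (fun q => ¬ q < r), w q := by linarith
  -- wt identities
  have hA : wt w (CTree.ltNode r (CTree.eqNode m M T1) (mkTest t i T3 T4))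
      = ∑ q ∈ Finset.Icc 1 n, w q :=
    wt_eq_sum w _ _ ⟨m, hm⟩ hirr0 hsearch
  have hS2 : wt w (mkTest t i T3 T4)
      = ∑ q ∈ (Finset.Icc 1 n).filter (fun q => ¬ q < r), w q := by
    refine wt_eq_sum w _ _ hne2 hirrR (fun q hq => ?_)
    obtain ⟨hqQ, hqr⟩ := Finset.mem_filter.mp hq
    simpa [search, hqr] using hsearch q hqQ
  have hS3 : wt w T3
      = ∑ q ∈ ((Finset.Icc 1 n).filter (fun q => ¬ q < r)).filter (fun q => hiOutcome t i q), w q := by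
    refine wt_eq_sum w _ _ hne3 hirr3 (fun q hq => ?_)
    simp only [Finset.mem_filter] at hq
    exact hsT3 q hq.1.1 hq.1.2 hq.2
  have hQhi : ((Finset.Icc 1 n).filter (fun q => ¬ q < r)).filter (fun q => hiOutcome t i q)
      = (Finset.Icc 1 n).filter (fun q => hiOutcome t i q) := by
    ext q
    simp only [Finset.mem_filter]
    exact ⟨fun h => ⟨h.1.1, h.2⟩, fun h => ⟨⟨h.1, hi_nr q h.2⟩, h.2⟩⟩
  -- partition of the total weight
  have hpart : ∑ q ∈ (Finset.Icc 1 n).filter (fun q => ¬ hiOutcome t i q ∧ q ≠ m), w q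
      + ∑ q ∈ (Finset.Icc 1 n).filter (fun q => hiOutcome t i q), w q + w m
      = ∑ q ∈ Finset.Icc 1 n, w q := by
    have e1 : ((Finset.Icc 1 n).erase m).filter (fun q => hiOutcome t i q)
        = (Finset.Icc 1 n).filter (fun q => hiOutcome t i q) := by
      ext q
      simp only [Finset.mem_filter, Finset.mem_erase]
      exact ⟨fun h => ⟨h.1.2, h.2⟩, fun h => ⟨⟨hi_nm q h.2, h.1⟩, h.2⟩⟩
    have e2 : ((Finset.Icc 1 n).erase m).filter (fun q => ¬ hiOutcome t i q)
        = (Finset.Icc 1 n).filter (fun q => ¬ hiOutcome t i q ∧ q ≠ m) := by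
      ext q
      simp only [Finset.mem_filter, Finset.mem_erase]
      tauto
    have hsp := Finset.sum_filter_add_sum_filter_not ((Finset.Icc 1 n).erase m)
      (fun q => hiOutcome t i q) w
    rw [e1, e2] at hsp
    have her := Finset.sum_erase_add (Finset.Icc 1 n) w hm
    linarith
  -- final cost comparison
  refine ⟨⟨hkeys', hsearch'⟩, trivial, ?_⟩
  rw [hcost', sum_corr w _ m hm]
  have h73 : (∑ q ∈ Finset.Icc 1 n, w q) ≤ 7/3 * w m := by
    rw [← hA]; linarith
  have h13 : (1/3 : ℝ) * w m ≤ wt w T3 := by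
    rw [hS2] at hT3
    linarith
  rw [hS3, hQhi] at h13
  linarith
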